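/- arXiv:2010.13176 — 3 statements merged into one kernel-verified Lean document; each statement's English description precedes it below -/
import Mathlib

section
/- Let (Ω,≤) be a totally ordered set, ≺ a well-ordering of Ω, and let <_P be the natural left-ordering of Aut(Ω,≤) determined by ≺ via the standard construction. Suppose S ⊆ Ω satisfies: x ∈ S and y ≺ x imply y ∈ S. Then the pointwise stabilizer C_S = {φ ∈ Aut(Ω,≤) : φ(s) = s for all s ∈ S} is a convex subgroup of Aut(Ω,≤) with respect to <_P. -/
namespace Paper

/-- `f` is positive in the natural left-ordering of `Aut(Ω,≤)` determined by the
well-ordering `r` of `Ω` (Construction 3.1): the `r`-least point `x_f` moved by `f`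
satisfies `x_f < f x_f`.  (The point `x` below is the `r`-least moved point, since all
`r`-smaller points are required to be fixed.) -/
def NatPos {Ω : Type*} [LinearOrder Ω] (r : Ω → Ω → Prop) (f : Ω ≃o Ω) : Prop :=
  ∃ x : Ω, f x ≠ x ∧ (∀ y : Ω, r y x → f y = y) ∧ x < f x

/-- The natural left-ordering `<_P` of `Aut(Ω,≤)` determined by `r`: `f <_P g` iff
`f⁻¹ * g` lies in the positive cone. -/
def NatLt {Ω : Type*} [LinearOrder Ω] (r : Ω → Ω → Prop) (f g : Ω ≃o Ω) : Prop :=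
  NatPos r (f⁻¹ * g)

/-- Proposition 3.2: if `S ⊆ Ω` is downward closed for the well-ordering `r`, then the
pointwise stabilizer `C_S` is a convex subgroup of `Aut(Ω,≤)` with respect to the natural
left-ordering determined by `r`. -/
theorem stmt0 {Ω : Type*} [LinearOrder Ω] (r : Ω → Ω → Prop) [IsWellOrder Ω r]
    (S : Set Ω) (hS : ∀ x ∈ S, ∀ y : Ω, r y x → y ∈ S)
    (C : Set (Ω ≃o Ω)) (hC : C = {φ : Ω ≃o Ω | ∀ s ∈ S, φ s = s}) :
    (1 ∈ C) ∧ (∀ f ∈ C, ∀ g ∈ C, f * g ∈ C) ∧ (∀ f ∈ C, f⁻¹ ∈ C) ∧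
    (∀ f ∈ C, ∀ g ∈ C, ∀ h : Ω ≃o Ω, NatLt r f h → NatLt r h g → h ∈ C) := by
  subst hC
  have hmul : ∀ (f g : Ω ≃o Ω) (x : Ω), (f * g) x = f (g x) := fun _ _ _ => rfl
  have hinv : ∀ (f : Ω ≃o Ω) (x : Ω), f x = x → f⁻¹ x = x := by
    intro f x hx
    nth_rewrite 1 [← hx]
    exact f.symm_apply_apply x
  have happly : ∀ (f : Ω ≃o Ω) (x : Ω), f (f⁻¹ x) = x := fun f x => f.apply_symm_apply x
  refine ⟨fun s _ => rfl, fun f hf g hg s hs => by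
      rw [hmul, hg s hs, hf s hs], fun f hf s hs => hinv f s (hf s hs), ?_⟩
  intro f hf g hg h hfh hhg s hs
  by_contra hmoves
  obtain ⟨x, hx, hxfix, hxlt⟩ := hfh
  obtain ⟨x', hx', hx'fix, hx'lt⟩ := hhg
  -- f⁻¹ * h moves s, since h s ≠ s and f s = s
  have hs1 : (f⁻¹ * h) s ≠ s := by
    rw [hmul]
    intro heq
    apply hmoves
    have := congrArg f heq
    rwa [happly, hf s hs] at this
  -- h⁻¹ * g moves s
  have hs2 : (h⁻¹ * g) s ≠ s := by
    rw [hmul, hg s hs]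
    intro heq
    apply hmoves
    have := congrArg h heq
    rw [happly] at this
    exact this.symm
  -- x ∈ S
  have hxS : x ∈ S := by
    rcases trichotomous_of r x s with h1 | h1 | h1
    · exact hS s hs x h1
    · rwa [h1]
    · exact absurd (hxfix s h1) hs1
  have hx'S : x' ∈ S := by
    rcases trichotomous_of r x' s with h1 | h1 | h1
    · exact hS s hs x' h1
    · rwa [h1]
    · exact absurd (hx'fix s h1) hs2
  -- x < h x  and  h x' < x'
  have hx_lt : x < h x := by
    have : (f⁻¹ * h) x = f⁻¹ (h x) := hmul f⁻¹ h x
    rw [this] at hxlt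
    have := congrArg f (rfl : f⁻¹ (h x) = f⁻¹ (h x))
    have hfx : f x = x := hf x hxS
    calc x = f x := hfx.symm
      _ < f (f⁻¹ (h x)) := f.strictMono hxlt
      _ = h x := happly f _
  have hx'_gt : h x' < x' := by
    have : (h⁻¹ * g) x' = h⁻¹ x' := by rw [hmul, hg x' hx'S]
    rw [this] at hx'lt
    have := h.strictMono hx'lt
    rwa [happly] at this
  rcases trichotomous_of r x x' with h1 | h1 | h1
  · -- x fixed by h⁻¹ * g, hence h x = x, contradiction with x < h x
    have := hx'fix x h1
    rw [hmul, hg x hxS] at this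
    have := congrArg h this
    rw [happly] at this
    exact absurd this.symm (ne_of_gt hx_lt)
  · rw [h1] at hx_lt; exact absurd hx_lt (not_lt.mpr hx'_gt.le)
  · -- x' fixed by f⁻¹ * h, hence h x' = f x' = x'
    have := hxfix x' h1
    rw [hmul] at this
    have := congrArg f this
    rw [happly, hf x' hx'S] at this
    exact absurd this (ne_of_lt hx'_gt)

end Paper
end

section
/- Let F(X) be the free group on the generating set X = {x_r : r ∈ ℝ}. Then F(X) admits a positive cone P (equivalently, a left-ordering) such that for every subset S ⊆ ℝ which is downward closed (x ∈ S and y < x imply y ∈ S), the subgroup F(X_S) generated by {x_r : r ∈ S} is convex with respect to the left-ordering determined by P. -/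
namespace Paper

/-- A positive cone of a group `G`: `P · P ⊆ P` and `P ∪ P⁻¹ = G ∖ {1}`.
It determines a left-ordering by `g < h` iff `g⁻¹h ∈ P`. -/
def IsPositiveCone {G : Type*} [Group G] (P : Set G) : Prop :=
  (∀ a ∈ P, ∀ b ∈ P, a * b ∈ P) ∧ (P ∪ P⁻¹ = {g : G | g ≠ 1})

/-- The left-ordering determined by a positive cone. -/
def coneLt {G : Type*} [Group G] (P : Set G) (a b : G) : Prop := a⁻¹ * b ∈ P

open FreeGroup

/-! ### A reordered copy of ℤ with 0 minimal -/

def zenc (n : ℤ) : ℤ := if 0 ≤ n then 2 * n else -2 * n + 1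

lemma zenc_inj : Function.Injective zenc := by
  intro a b h
  unfold zenc at h
  split_ifs at h <;> omega

def ZZ : Type := ℤ

def ZZ.mk : ℤ → ZZ := id
def ZZ.val : ZZ → ℤ := id

@[simp] lemma ZZ.val_mk (n : ℤ) : (ZZ.mk n).val = n := rfl
@[simp] lemma ZZ.mk_val (m : ZZ) : ZZ.mk m.val = m := rfl

lemma ZZ.val_injective : Function.Injective ZZ.val := fun _ _ h => h

noncomputable instance : LinearOrder ZZ :=
  LinearOrder.lift' (fun m => zenc m.val) (fun _ _ h => ZZ.val_injective (zenc_inj h))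

lemma ZZ.lt_def {a b : ZZ} : a < b ↔ zenc a.val < zenc b.val := Iff.rfl

lemma ZZ.not_lt_zero (m : ZZ) : ¬ m < ZZ.mk 0 := by
  rw [ZZ.lt_def]
  show ¬ zenc m.val < zenc 0
  unfold zenc
  split_ifs <;> omega

/-! ### The index set for the recursion -/

abbrev JJ (I : Type) : Type := Lex (ZZ × I)

noncomputable instance (I : Type) [LinearOrder I] : LinearOrder (JJ I) :=
  Prod.Lex.instLinearOrder _ _

/-- The canonical embedding `I → JJ I` at level `0`. -/
def jj {I : Type} (s : I) : JJ I := toLex (ZZ.mk 0, s)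

lemma jj_strictMono {I : Type} [LinearOrder I] : StrictMono (jj (I := I)) := by
  intro a b h
  rw [jj, jj, Prod.Lex.lt_iff]
  right; exact ⟨rfl, h⟩

/-- Shift of levels. -/
def jshift {I : Type} (k : ℤ) : JJ I ≃ JJ I where
  toFun p := toLex (ZZ.mk ((ofLex p).1.val + k), (ofLex p).2)
  invFun p := toLex (ZZ.mk ((ofLex p).1.val - k), (ofLex p).2)
  left_inv p := by
    show toLex (ZZ.mk ((ZZ.mk ((ofLex p).1.val + k)).val - k), (ofLex p).2) = p
    rw [ZZ.val_mk]
    have : (ofLex p).1.val + k - k = (ofLex p).1.val := by ring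
    rw [this, ZZ.mk_val]
    rfl
  right_inv p := by
    show toLex (ZZ.mk ((ZZ.mk ((ofLex p).1.val - k)).val + k), (ofLex p).2) = p
    rw [ZZ.val_mk]
    have : (ofLex p).1.val - k + k = (ofLex p).1.val := by ring
    rw [this, ZZ.mk_val]
    rfl

@[simp] lemma ofLex_jshift {I : Type} (k : ℤ) (p : JJ I) :
    ofLex (jshift k p) = (ZZ.mk ((ofLex p).1.val + k), (ofLex p).2) := rfl

lemma jshift_add {I : Type} (a b : ℤ) :
    (jshift (a + b) : JJ I ≃ JJ I) = (jshift b).trans (jshift a) := by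
  ext p
  show toLex (ZZ.mk ((ofLex p).1.val + (a + b)), (ofLex p).2) = jshift a (jshift b p)
  show _ = toLex (ZZ.mk ((ofLex (jshift b p)).1.val + a), (ofLex (jshift b p)).2)
  rw [ofLex_jshift]
  have : (ofLex p).1.val + (a + b) = (ZZ.mk ((ofLex p).1.val + b)).val + a := by
    rw [ZZ.val_mk]; ring
  rw [this]

/-- The shift action of `Multiplicative ℤ` on `FreeGroup (JJ I)`. -/
def act {I : Type} : Multiplicative ℤ →* MulAut (FreeGroup (JJ I)) :=
  MonoidHom.mk' (fun k => freeGroupCongr (jshift k.toAdd)) (by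
    intro a b
    have h1 : (jshift ((a * b).toAdd) : JJ I ≃ JJ I)
        = (jshift b.toAdd).trans (jshift a.toAdd) := by
      rw [show (a * b).toAdd = a.toAdd + b.toAdd from rfl, ← jshift_add]
    show freeGroupCongr (jshift (a * b).toAdd)
        = freeGroupCongr (jshift a.toAdd) * freeGroupCongr (jshift b.toAdd)
    rw [h1, ← freeGroupCongr_trans]
    rfl)

lemma act_apply_of {I : Type} (k : Multiplicative ℤ) (p : JJ I) :
    act k (FreeGroup.of p) = FreeGroup.of (jshift k.toAdd p) := by
  show freeGroupCongr (jshift k.toAdd) (FreeGroup.of p) = _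
  simp

/-! ### The splitting homomorphism -/

variable {I : Type} [LinearOrder I]
set_option linter.unusedSectionVars false

/-- The semidirect product hosting the splitting at level `r`. -/
abbrev SD (I : Type) [LinearOrder I] : Type :=
  SemidirectProduct (FreeGroup (JJ I)) (Multiplicative ℤ) act

/-- The splitting homomorphism at `r`. -/
noncomputable def Phi (r : I) : FreeGroup I →* SD I :=
  FreeGroup.lift (fun s =>
    if s = r then SemidirectProduct.inr (Multiplicative.ofAdd 1)
    else SemidirectProduct.inl (FreeGroup.of (jj s)))

/-- The back map on the free group over `JJ I`. -/
noncomputable def Bleft (r : I) : FreeGroup (JJ I) →* FreeGroup I :=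
  FreeGroup.lift (fun p =>
    FreeGroup.of r ^ ((ofLex p).1.val) * FreeGroup.of ((ofLex p).2) *
      FreeGroup.of r ^ (-(ofLex p).1.val))

/-- `Multiplicative ℤ → FreeGroup I`, `k ↦ x_r ^ k`. -/
noncomputable def Bright (r : I) : Multiplicative ℤ →* FreeGroup I :=
  MonoidHom.mk' (fun k => FreeGroup.of r ^ k.toAdd) (by
    intro a b
    show FreeGroup.of r ^ (a * b).toAdd = FreeGroup.of r ^ a.toAdd * FreeGroup.of r ^ b.toAdd
    rw [show (a * b).toAdd = a.toAdd + b.toAdd from rfl, zpow_add])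

lemma B_compat (r : I) : ∀ g, (Bleft r).comp (act g).toMonoidHom
    = (MulAut.conj (Bright r g)).toMonoidHom.comp (Bleft r) := by
  intro g
  apply FreeGroup.ext_hom
  intro p
  show Bleft r (act g (FreeGroup.of p)) = MulAut.conj (Bright r g) (Bleft r (FreeGroup.of p))
  rw [act_apply_of, MulAut.conj_apply]
  show Bleft r (FreeGroup.of (jshift g.toAdd p))
      = Bright r g * Bleft r (FreeGroup.of p) * (Bright r g)⁻¹
  unfold Bleft Bright
  rw [FreeGroup.lift_apply_of, FreeGroup.lift_apply_of]
  show FreeGroup.of r ^ ((ofLex (jshift g.toAdd p)).1.val) *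
      FreeGroup.of ((ofLex (jshift g.toAdd p)).2) *
      FreeGroup.of r ^ (-(ofLex (jshift g.toAdd p)).1.val)
      = FreeGroup.of r ^ g.toAdd *
      (FreeGroup.of r ^ ((ofLex p).1.val) * FreeGroup.of ((ofLex p).2) *
        FreeGroup.of r ^ (-(ofLex p).1.val)) * (FreeGroup.of r ^ g.toAdd)⁻¹
  rw [ofLex_jshift]
  show FreeGroup.of r ^ ((ZZ.mk ((ofLex p).1.val + g.toAdd)).val) *
      FreeGroup.of ((ofLex p).2) *
      FreeGroup.of r ^ (-(ZZ.mk ((ofLex p).1.val + g.toAdd)).val) = _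
  rw [ZZ.val_mk]
  group

/-- The back homomorphism `SD I →* FreeGroup I`. -/
noncomputable def B (r : I) : SD I →* FreeGroup I :=
  SemidirectProduct.lift (Bleft r) (Bright r) (B_compat r)

lemma Bleft_of_jj (r : I) (s : I) : Bleft r (FreeGroup.of (jj s)) = FreeGroup.of s := by
  unfold Bleft
  rw [FreeGroup.lift_apply_of]
  show FreeGroup.of r ^ ((ZZ.mk 0).val) * FreeGroup.of s * FreeGroup.of r ^ (-(ZZ.mk 0).val) = _
  rw [ZZ.val_mk]
  group

lemma B_Phi (r : I) (w : FreeGroup I) : B r (Phi r w) = w := by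
  have key : (B r).comp (Phi r) = MonoidHom.id _ := by
    apply FreeGroup.ext_hom
    intro s
    show B r (Phi r (FreeGroup.of s)) = FreeGroup.of s
    unfold Phi
    rw [FreeGroup.lift_apply_of]
    by_cases h : s = r
    · rw [if_pos h]
      unfold B
      rw [SemidirectProduct.lift_inr]
      subst h
      show FreeGroup.of s ^ ((Multiplicative.ofAdd (1:ℤ)).toAdd) = FreeGroup.of s
      simp
    · rw [if_neg h]
      unfold B
      rw [SemidirectProduct.lift_inl]
      exact Bleft_of_jj r s
  calc B r (Phi r w) = ((B r).comp (Phi r)) w := rfl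
  _ = w := by rw [key]; rfl

/-! ### Exponent sums -/

/-- Exponent sum at `r`, as a hom to `Multiplicative ℤ`. -/
noncomputable def eS (r : I) : FreeGroup I →* Multiplicative ℤ :=
  FreeGroup.lift (fun s => Multiplicative.ofAdd (if s = r then 1 else 0))

/-- Exponent sum at `r` as an integer. -/
noncomputable def e (r : I) (w : FreeGroup I) : ℤ := (eS r w).toAdd

lemma e_mul (r : I) (u w : FreeGroup I) : e r (u * w) = e r u + e r w := by
  unfold e; rw [_root_.map_mul]; rfl

lemma e_inv (r : I) (w : FreeGroup I) : e r w⁻¹ = - e r w := by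
  unfold e; rw [_root_.map_inv]; rfl

lemma e_one (r : I) : e r (1 : FreeGroup I) = 0 := by
  unfold e; rw [_root_.map_one]; rfl

lemma e_of (r s : I) : e r (FreeGroup.of s) = if s = r then 1 else 0 := by
  unfold e eS; rw [FreeGroup.lift_apply_of]; rfl

lemma rightHom_Phi (r : I) (w : FreeGroup I) :
    SemidirectProduct.rightHom (Phi r w) = eS r w := by
  have key : (SemidirectProduct.rightHom).comp (Phi r) = eS r := by
    apply FreeGroup.ext_hom
    intro s
    show SemidirectProduct.rightHom (Phi r (FreeGroup.of s)) = eS r (FreeGroup.of s)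
    unfold Phi eS
    rw [FreeGroup.lift_apply_of, FreeGroup.lift_apply_of]
    by_cases h : s = r
    · rw [if_pos h, if_pos h, SemidirectProduct.rightHom_inr]
    · rw [if_neg h, if_neg h, SemidirectProduct.rightHom_inl]
      rfl
  calc SemidirectProduct.rightHom (Phi r w) = ((SemidirectProduct.rightHom).comp (Phi r)) w := rfl
  _ = eS r w := by rw [key]

lemma right_Phi (r : I) (w : FreeGroup I) : (Phi r w).right = eS r w := by
  rw [← rightHom_Phi]; rfl

/-! ### Supports -/

section Words

variable {α β : Type} [DecidableEq α] [DecidableEq β]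

lemma norm_def (w : FreeGroup α) : FreeGroup.norm w = w.toWord.length := rfl

def supp (w : FreeGroup α) : List α := w.toWord.map Prod.fst

lemma supp_one : supp (1 : FreeGroup α) = [] := by
  unfold supp; rw [toWord_one]; rfl

lemma supp_eq_nil_iff {w : FreeGroup α} : supp w = [] ↔ w = 1 := by
  unfold supp
  rw [List.map_eq_nil_iff, toWord_eq_nil_iff]

lemma supp_of (s : α) : supp (FreeGroup.of s) = [s] := by
  unfold supp; rw [toWord_of]; rfl

lemma mem_supp_mul {s : α} {u w : FreeGroup α} (h : s ∈ supp (u * w)) :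
    s ∈ supp u ∨ s ∈ supp w := by
  unfold supp at *
  obtain ⟨p, hp, rfl⟩ := List.mem_map.1 h
  have hsub := toWord_mul_sublist u w
  have hm := hsub.mem hp
  rcases List.mem_append.1 hm with h1 | h1
  · exact Or.inl (List.mem_map.2 ⟨p, h1, rfl⟩)
  · exact Or.inr (List.mem_map.2 ⟨p, h1, rfl⟩)

lemma mem_supp_inv {s : α} {w : FreeGroup α} : s ∈ supp w⁻¹ ↔ s ∈ supp w := by
  unfold supp
  rw [toWord_inv]
  unfold invRev
  constructor <;> intro h
  · obtain ⟨p, hp, rfl⟩ := List.mem_map.1 h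
    rw [List.mem_reverse] at hp
    obtain ⟨q, hq, rfl⟩ := List.mem_map.1 hp
    exact List.mem_map.2 ⟨q, hq, rfl⟩
  · obtain ⟨p, hp, rfl⟩ := List.mem_map.1 h
    refine List.mem_map.2 ⟨(p.1, !p.2), ?_, rfl⟩
    rw [List.mem_reverse]
    exact List.mem_map.2 ⟨p, hp, rfl⟩

lemma mk_cons (p : α × Bool) (L : List (α × Bool)) :
    FreeGroup.mk (p :: L) = FreeGroup.mk [p] * FreeGroup.mk L := by
  rw [mul_mk]; rfl

lemma mk_singleton (s : α) (b : Bool) :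
    FreeGroup.mk [(s, b)] = cond b (FreeGroup.of s) (FreeGroup.of s)⁻¹ := by
  cases b
  · show FreeGroup.mk [(s, false)] = (FreeGroup.of s)⁻¹
    show _ = (FreeGroup.mk [(s, true)])⁻¹
    rw [inv_mk]
    rfl
  · rfl

/-! ### Map along an injective function -/

lemma reduce_map_comm {f : α → β} (hf : Function.Injective f) :
    ∀ L : List (α × Bool),
      FreeGroup.reduce (L.map (fun p => (f p.1, p.2)))
        = (FreeGroup.reduce L).map (fun p => (f p.1, p.2)) := by
  intro L
  induction L with
  | nil => rfl
  | cons x L ih =>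
    rw [List.map_cons, reduce.cons, reduce.cons, ih]
    cases hres : FreeGroup.reduce L with
    | nil => rfl
    | cons hd tl =>
      rw [List.map_cons]
      show (if f x.1 = f hd.1 ∧ x.2 = !hd.2 then tl.map (fun p => (f p.1, p.2))
          else (f x.1, x.2) :: (f hd.1, hd.2) :: tl.map (fun p => (f p.1, p.2)))
        = (if x.1 = hd.1 ∧ x.2 = !hd.2 then tl else x :: hd :: tl).map (fun p => (f p.1, p.2))
      by_cases h : x.1 = hd.1 ∧ x.2 = !hd.2
      · rw [if_pos ⟨congrArg f h.1, h.2⟩, if_pos h]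
      · rw [if_neg (fun hc => h ⟨hf hc.1, hc.2⟩), if_neg h]
        rfl

lemma toWord_map_inj {f : α → β} (hf : Function.Injective f) (w : FreeGroup α) :
    (FreeGroup.map f w).toWord = w.toWord.map (fun p => (f p.1, p.2)) := by
  conv_lhs => rw [← mk_toWord (x := w)]
  rw [map.mk, toWord_mk, reduce_map_comm hf, reduce_toWord]

lemma supp_map_inj {f : α → β} (hf : Function.Injective f) (w : FreeGroup α) :
    supp (FreeGroup.map f w) = (supp w).map f := by
  unfold supp
  rw [toWord_map_inj hf, List.map_map, List.map_map]
  rfl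

lemma norm_map_inj {f : α → β} (hf : Function.Injective f) (w : FreeGroup α) :
    FreeGroup.norm (FreeGroup.map f w) = FreeGroup.norm w := by
  rw [norm_def, norm_def, toWord_map_inj hf, List.length_map]

lemma map_inj_eq_one_iff {f : α → β} (hf : Function.Injective f) {w : FreeGroup α} :
    FreeGroup.map f w = 1 ↔ w = 1 := by
  rw [← toWord_eq_nil_iff, ← toWord_eq_nil_iff, toWord_map_inj hf, List.map_eq_nil_iff]

end Words

/-! ### Exponent sum formulas -/

lemma e_single (r : I) (s : I) (b : Bool) :
    e r (FreeGroup.mk [(s, b)]) = if s = r then (cond b 1 (-1) : ℤ) else 0 := by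
  rw [mk_singleton]
  cases b
  · show e r (FreeGroup.of s)⁻¹ = _
    rw [e_inv, e_of]
    split_ifs <;> simp
  · show e r (FreeGroup.of s) = _
    rw [e_of]
    split_ifs <;> rfl

lemma e_eq_zero_of_not_mem {r : I} {w : FreeGroup I} (h : r ∉ supp w) : e r w = 0 := by
  conv_lhs => rw [← mk_toWord (x := w)]
  have : ∀ L : List (I × Bool), (∀ p ∈ L, p.1 ≠ r) → e r (FreeGroup.mk L) = 0 := by
    intro L
    induction L with
    | nil => intro _; show e r 1 = 0; exact e_one r
    | cons p L ih =>
      intro hav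
      rw [mk_cons, e_mul, e_single, ih (fun q hq => hav q (List.mem_cons_of_mem p hq)),
        if_neg (hav p (List.mem_cons_self))]
      ring
  apply this
  intro p hp hc
  exact h (hc ▸ List.mem_map.2 ⟨p, hp, rfl⟩)

lemma e_ne_zero_mem {r : I} {w : FreeGroup I} (h : e r w ≠ 0) : r ∈ supp w := by
  by_contra hc
  exact h (e_eq_zero_of_not_mem hc)

lemma e_mk_parity (r : I) : ∀ L : List (I × Bool),
    e r (FreeGroup.mk L) % 2 = ((L.countP fun p => decide (p.1 = r)) : ℤ) % 2 := by
  intro L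
  induction L with
  | nil =>
    show e r 1 % 2 = _
    rw [e_one]; rfl
  | cons p L ih =>
    rw [mk_cons, e_mul, e_single, List.countP_cons]
    by_cases h : p.1 = r <;> cases hb : p.2 <;> simp [h] <;> push_cast <;> omega

lemma count_ge_two {r : I} {w : FreeGroup I} (hmem : r ∈ supp w) (he : e r w = 0) :
    2 ≤ w.toWord.countP (fun p => decide (p.1 = r)) := by
  have hpar := e_mk_parity r w.toWord
  rw [mk_toWord, he] at hpar
  have hpos : 0 < w.toWord.countP (fun p => decide (p.1 = r)) := by
    rw [List.countP_pos_iff]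
    obtain ⟨p, hp, rfl⟩ := List.mem_map.1 hmem
    exact ⟨p, hp, by simp⟩
  omega

/-! ### Facts about `Phi` -/

lemma norm_act (g : Multiplicative ℤ) (v : FreeGroup (JJ I)) :
    FreeGroup.norm (act g v) = FreeGroup.norm v := by
  show FreeGroup.norm (freeGroupCongr (jshift g.toAdd) v) = FreeGroup.norm v
  have h : freeGroupCongr (jshift g.toAdd) v = FreeGroup.map (jshift g.toAdd) v := rfl
  rw [h, norm_map_inj (jshift g.toAdd).injective]

lemma norm_left_inv (x : SD I) : FreeGroup.norm (x⁻¹.left) = FreeGroup.norm x.left := by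
  rw [SemidirectProduct.inv_left, norm_act, FreeGroup.norm_inv_eq]

lemma Phi_of_ne {r s : I} (h : s ≠ r) :
    Phi r (FreeGroup.of s) = SemidirectProduct.inl (FreeGroup.of (jj s)) := by
  unfold Phi
  rw [FreeGroup.lift_apply_of, if_neg h]

lemma Phi_of_eq (r : I) :
    Phi r (FreeGroup.of r) = SemidirectProduct.inr (Multiplicative.ofAdd 1) := by
  unfold Phi
  rw [FreeGroup.lift_apply_of, if_pos rfl]

lemma Phi_mk_avoid (r : I) : ∀ L : List (I × Bool), (∀ p ∈ L, p.1 ≠ r) →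
    Phi r (FreeGroup.mk L) = SemidirectProduct.inl (FreeGroup.map jj (FreeGroup.mk L)) := by
  intro L
  induction L with
  | nil =>
    intro _
    show Phi r 1 = SemidirectProduct.inl (FreeGroup.map jj 1)
    rw [_root_.map_one, _root_.map_one, _root_.map_one]
  | cons p L ih =>
    intro hav
    rw [mk_cons, _root_.map_mul, _root_.map_mul, _root_.map_mul,
      ih (fun q hq => hav q (List.mem_cons_of_mem p hq))]
    congr 1
    have hp : p.1 ≠ r := hav p (List.mem_cons_self)
    rw [mk_singleton]
    cases hb : p.2
    · show Phi r (FreeGroup.of p.1)⁻¹ = SemidirectProduct.inl (FreeGroup.map jj (FreeGroup.of p.1)⁻¹)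
      rw [_root_.map_inv, _root_.map_inv, _root_.map_inv, Phi_of_ne hp, map.of]
    · show Phi r (FreeGroup.of p.1) = SemidirectProduct.inl (FreeGroup.map jj (FreeGroup.of p.1))
      rw [Phi_of_ne hp, map.of]

lemma Phi_avoid {r : I} {w : FreeGroup I} (h : r ∉ supp w) :
    Phi r w = SemidirectProduct.inl (FreeGroup.map jj w) := by
  conv_lhs => rw [← mk_toWord (x := w)]
  conv_rhs => rw [← mk_toWord (x := w)]
  apply Phi_mk_avoid
  intro p hp hc
  exact h (hc ▸ List.mem_map.2 ⟨p, hp, rfl⟩)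

lemma norm_Phi_left_single (r : I) (p : I × Bool) :
    FreeGroup.norm ((Phi r (FreeGroup.mk [p])).left)
      ≤ if p.1 = r then 0 else 1 := by
  obtain ⟨s, b⟩ := p
  rw [mk_singleton]
  have key : FreeGroup.norm ((Phi r (FreeGroup.of s)).left) ≤ if s = r then 0 else 1 := by
    by_cases h : s = r
    · rw [if_pos h, h, Phi_of_eq, SemidirectProduct.left_inr, FreeGroup.norm_one]
    · rw [if_neg h, Phi_of_ne h, SemidirectProduct.left_inl, FreeGroup.norm_of]
  cases b
  · show FreeGroup.norm ((Phi r (FreeGroup.of s)⁻¹).left) ≤ _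
    rw [_root_.map_inv, norm_left_inv]
    exact key
  · exact key

lemma norm_Phi_mk_left_le (r : I) : ∀ L : List (I × Bool),
    FreeGroup.norm ((Phi r (FreeGroup.mk L)).left)
      ≤ L.length - L.countP (fun p => decide (p.1 = r)) := by
  intro L
  induction L with
  | nil =>
    show FreeGroup.norm ((Phi r 1).left) ≤ _
    rw [_root_.map_one]
    show FreeGroup.norm (1 : FreeGroup (JJ I)) ≤ _
    rw [FreeGroup.norm_one]
    exact Nat.zero_le _
  | cons p L ih =>
    rw [mk_cons, _root_.map_mul, List.countP_cons, SemidirectProduct.mul_left]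
    refine le_trans (FreeGroup.norm_mul_le _ _) ?_
    rw [norm_act]
    have h1 := norm_Phi_left_single r p
    have hle := List.countP_le_length (p := fun p => decide (p.1 = r)) (l := L)
    rw [List.length_cons]
    by_cases h : p.1 = r
    · rw [if_pos h] at h1
      have h2 : (decide (p.1 = r)) = true := by simp [h]
      rw [h2, if_pos rfl]
      omega
    · rw [if_neg h] at h1
      have h2 : (decide (p.1 = r)) = false := by simp [h]
      rw [h2]
      rw [if_neg (by simp)]
      omega

lemma norm_Phi_left_le (r : I) (w : FreeGroup I) :
    FreeGroup.norm ((Phi r w).left) ≤ FreeGroup.norm w := by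
  have h1 := norm_Phi_mk_left_le r w.toWord
  rw [mk_toWord] at h1
  refine le_trans h1 ?_
  rw [norm_def]
  omega

lemma norm_Phi_left_lt {r : I} {w : FreeGroup I} (hmem : r ∈ supp w) (he : e r w = 0) :
    FreeGroup.norm ((Phi r w).left) + 2 ≤ FreeGroup.norm w := by
  have h1 := norm_Phi_mk_left_le r w.toWord
  rw [mk_toWord] at h1
  have h2 := count_ge_two hmem he
  have hle := List.countP_le_length (p := fun p => decide (p.1 = r)) (l := w.toWord)
  simp only [norm_def] at h1 ⊢
  omega

/-! ### Small helpers -/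

lemma list_max_exists {K : Type} [LinearOrder K] {l : List K} (h : l ≠ []) :
    ∃ r : K, l.maximum = (r : WithBot K) := by
  cases hm : l.maximum with
  | bot => exact absurd (List.maximum_eq_bot.1 hm) h
  | coe r => exact ⟨r, rfl⟩

lemma eS_eq_one {r : I} {w : FreeGroup I} (he : e r w = 0) : eS r w = 1 := by
  have : (eS r w).toAdd = (1 : Multiplicative ℤ).toAdd := he
  exact Multiplicative.toAdd.injective this

lemma inl_mul_left (a : FreeGroup (JJ I)) (y : SD I) :
    (SemidirectProduct.inl a * y).left = a * y.left := by
  rw [SemidirectProduct.mul_left, SemidirectProduct.right_inl, _root_.map_one]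
  rfl

lemma Phi_inv_left_of_e_zero {r : I} {w : FreeGroup I} (he : e r w = 0) :
    ((Phi r w)⁻¹).left = ((Phi r w).left)⁻¹ := by
  rw [SemidirectProduct.inv_left, right_Phi, eS_eq_one he]
  show act (1 : Multiplicative ℤ) _ = _
  rw [_root_.map_one]
  rfl

lemma Phi_inv_right_of_e_zero {r : I} {w : FreeGroup I} (he : e r w = 0) :
    ((Phi r w)⁻¹).right = 1 := by
  rw [SemidirectProduct.inv_right, right_Phi, eS_eq_one he, inv_one]

lemma Phi_eq_inl_of_e_zero {r : I} {w : FreeGroup I} (he : e r w = 0) :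
    Phi r w = SemidirectProduct.inl ((Phi r w).left) := by
  conv_lhs => rw [← SemidirectProduct.inl_left_mul_inr_right (Phi r w)]
  rw [right_Phi, eS_eq_one he, _root_.map_one, mul_one]

lemma Phi_left_mul_of_e_zero {r : I} {u w : FreeGroup I} (he : e r u = 0) :
    (Phi r (u * w)).left = (Phi r u).left * (Phi r w).left := by
  rw [_root_.map_mul, SemidirectProduct.mul_left, right_Phi, eS_eq_one he, _root_.map_one]
  rfl

lemma Phi_left_inv_mul {r : I} {u w : FreeGroup I} (he : e r u = 0) :
    (Phi r (u⁻¹ * w)).left = ((Phi r u).left)⁻¹ * (Phi r w).left := by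
  rw [_root_.map_mul, _root_.map_inv, SemidirectProduct.mul_left,
    Phi_inv_left_of_e_zero he, Phi_inv_right_of_e_zero he, _root_.map_one]
  rfl

lemma w_eq_Bleft {r : I} {w : FreeGroup I} (he : e r w = 0) :
    w = Bleft r ((Phi r w).left) := by
  have h1 := Phi_eq_inl_of_e_zero he
  have h2 : B r (Phi r w) = w := B_Phi r w
  rw [h1] at h2
  conv_lhs => rw [← h2]
  unfold B
  rw [SemidirectProduct.lift_inl]

lemma e_map {K K' : Type} [LinearOrder K] [LinearOrder K'] {ι : K → K'}
    (hι : Function.Injective ι) (r : K) (w : FreeGroup K) :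
    e (ι r) (FreeGroup.map ι w) = e r w := by
  have key : (eS (ι r)).comp (FreeGroup.map ι) = eS r := by
    apply FreeGroup.ext_hom
    intro s
    show eS (ι r) (FreeGroup.map ι (FreeGroup.of s)) = eS r (FreeGroup.of s)
    rw [map.of]
    unfold eS
    rw [FreeGroup.lift_apply_of, FreeGroup.lift_apply_of]
    by_cases h : s = r
    · rw [if_pos h, if_pos (congrArg ι h)]
    · rw [if_neg h, if_neg (fun hc => h (hι hc))]
  show ((eS (ι r)).comp (FreeGroup.map ι) w).toAdd = _
  rw [key]
  rfl

/-! ### Naturality of `Phi` -/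

def jmap {K K' : Type} (ι : K → K') : JJ K → JJ K' :=
  fun p => toLex ((ofLex p).1, ι (ofLex p).2)

lemma jmap_strictMono {K K' : Type} [LinearOrder K] [LinearOrder K'] {ι : K → K'}
    (hι : StrictMono ι) : StrictMono (jmap (K := K) (K' := K') ι) := by
  intro p q hpq
  have h1 : toLex (ofLex p) < toLex (ofLex q) := hpq
  rw [Prod.Lex.lt_iff] at h1
  show toLex _ < toLex _
  rw [Prod.Lex.lt_iff]
  rcases h1 with h | ⟨h1, h2⟩
  · exact Or.inl h
  · exact Or.inr ⟨h1, hι h2⟩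

lemma jmap_jj {K K' : Type} (ι : K → K') (s : K) : jmap ι (jj s) = jj (ι s) := rfl

/-- The induced homomorphism on semidirect products. -/
noncomputable def Psi {K K' : Type} [LinearOrder K] [LinearOrder K'] (ι : K → K') :
    SD K →* SD K' :=
  SemidirectProduct.lift
    ((SemidirectProduct.inl).comp (FreeGroup.map (jmap ι)))
    (SemidirectProduct.inr)
    (by
      intro g
      apply FreeGroup.ext_hom
      intro p
      show SemidirectProduct.inl (FreeGroup.map (jmap ι) (act g (FreeGroup.of p)))
        = MulAut.conj (SemidirectProduct.inr g) (SemidirectProduct.inl (FreeGroup.map (jmap ι) (FreeGroup.of p)))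
      rw [act_apply_of, map.of, map.of, MulAut.conj_apply, ← _root_.map_inv,
        ← SemidirectProduct.inl_aut, act_apply_of]
      rfl)

lemma Psi_left {K K' : Type} [LinearOrder K] [LinearOrder K'] (ι : K → K') (x : SD K) :
    (Psi ι x).left = FreeGroup.map (jmap ι) x.left := by
  unfold Psi
  conv_lhs => rw [← SemidirectProduct.inl_left_mul_inr_right x]
  rw [_root_.map_mul, SemidirectProduct.lift_inl, SemidirectProduct.lift_inr]
  rw [SemidirectProduct.mul_left]
  show FreeGroup.map (jmap ι) x.left * act (1 : Multiplicative ℤ) 1 = _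
  rw [_root_.map_one]
  show FreeGroup.map (jmap ι) x.left * 1 = _
  rw [mul_one]

lemma Phi_map_left {K K' : Type} [LinearOrder K] [LinearOrder K'] {ι : K → K'}
    (hι : Function.Injective ι) (r : K) (w : FreeGroup K) :
    (Phi (ι r) (FreeGroup.map ι w)).left = FreeGroup.map (jmap ι) ((Phi r w).left) := by
  have key : (Phi (ι r)).comp (FreeGroup.map ι) = (Psi ι).comp (Phi r) := by
    apply FreeGroup.ext_hom
    intro s
    show Phi (ι r) (FreeGroup.map ι (FreeGroup.of s)) = Psi ι (Phi r (FreeGroup.of s))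
    rw [map.of]
    by_cases h : s = r
    · subst h
      rw [Phi_of_eq, Phi_of_eq]
      unfold Psi
      rw [SemidirectProduct.lift_inr]
    · rw [Phi_of_ne (fun hc => h (hι hc)), Phi_of_ne h]
      unfold Psi
      rw [SemidirectProduct.lift_inl]
      show _ = SemidirectProduct.inl (FreeGroup.map (jmap ι) (FreeGroup.of (jj s)))
      rw [map.of, jmap_jj]
  have h2 : Phi (ι r) (FreeGroup.map ι w) = Psi ι (Phi r w) := by
    calc Phi (ι r) (FreeGroup.map ι w) = ((Phi (ι r)).comp (FreeGroup.map ι)) w := rfl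
    _ = ((Psi ι).comp (Phi r)) w := by rw [key]
    _ = Psi ι (Phi r w) := rfl
  rw [h2, Psi_left]

/-! ### The positivity predicate -/

def Pos : (n : ℕ) → (K : Type) → [inst : LinearOrder K] → FreeGroup K → Prop
  | 0, _, _, _ => False
  | n + 1, K, _, w =>
      ∃ r : K, (supp w).maximum = (r : WithBot K) ∧
        (0 < e r w ∨ (e r w = 0 ∧ Pos n (JJ K) ((Phi r w).left)))

lemma Pos_succ (n : ℕ) (K : Type) [LinearOrder K] (w : FreeGroup K) :
    Pos (n + 1) K w ↔ ∃ r : K, (supp w).maximum = (r : WithBot K) ∧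
      (0 < e r w ∨ (e r w = 0 ∧ Pos n (JJ K) ((Phi r w).left))) := Iff.rfl

lemma Pos_succ_iff : ∀ (n : ℕ) (K : Type) [LinearOrder K] (w : FreeGroup K),
    FreeGroup.norm w ≤ n → (Pos (n + 1) K w ↔ Pos n K w) := by
  intro n
  induction n with
  | zero =>
    intro K _ w hw
    have hw1 : w = 1 := FreeGroup.norm_eq_zero.1 (Nat.le_zero.1 hw)
    subst hw1
    rw [Pos_succ]
    constructor
    · rintro ⟨r, hmax, -⟩
      rw [supp_one, List.maximum_nil] at hmax
      exact absurd hmax.symm (by simp)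
    · intro h
      exact absurd h (by rw [Pos]; exact id)
  | succ n ih =>
    intro K _ w hw
    rw [Pos_succ, Pos_succ]
    constructor
    · rintro ⟨r, hmax, hc⟩
      refine ⟨r, hmax, ?_⟩
      rcases hc with h | ⟨he, hp⟩
      · exact Or.inl h
      · refine Or.inr ⟨he, ?_⟩
        have hmem : r ∈ supp w := (List.maximum_eq_coe_iff.1 hmax).1
        have hlt := norm_Phi_left_lt hmem he
        exact (ih (JJ K) _ (by omega)).1 hp
    · rintro ⟨r, hmax, hc⟩
      refine ⟨r, hmax, ?_⟩
      rcases hc with h | ⟨he, hp⟩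
      · exact Or.inl h
      · refine Or.inr ⟨he, ?_⟩
        have hmem : r ∈ supp w := (List.maximum_eq_coe_iff.1 hmax).1
        have hlt := norm_Phi_left_lt hmem he
        exact (ih (JJ K) _ (by omega)).2 hp

/-- The left-order positivity predicate. -/
def PosC {K : Type} [LinearOrder K] (w : FreeGroup K) : Prop :=
  Pos (FreeGroup.norm w + 1) K w

lemma PosC_iff_pos {K : Type} [LinearOrder K] {w : FreeGroup K} :
    ∀ {n : ℕ}, FreeGroup.norm w < n → (Pos n K w ↔ PosC w) := by
  intro n
  induction n with
  | zero => omega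
  | succ n ih =>
    intro hn
    rcases Nat.lt_or_ge (FreeGroup.norm w) n with h | h
    · rw [Pos_succ_iff n K w (by omega), ih h]
    · have : n = FreeGroup.norm w := by omega
      subst this
      rfl

lemma PosC_def {K : Type} [LinearOrder K] (w : FreeGroup K) :
    PosC w ↔ ∃ r : K, (supp w).maximum = (r : WithBot K) ∧
      (0 < e r w ∨ (e r w = 0 ∧ PosC ((Phi r w).left))) := by
  rw [PosC, Pos_succ]
  constructor
  · rintro ⟨r, hmax, hc⟩
    refine ⟨r, hmax, ?_⟩
    rcases hc with h | ⟨he, hp⟩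
    · exact Or.inl h
    · refine Or.inr ⟨he, ?_⟩
      have hmem : r ∈ supp w := (List.maximum_eq_coe_iff.1 hmax).1
      have hlt := norm_Phi_left_lt hmem he
      exact (PosC_iff_pos (by omega)).1 hp
  · rintro ⟨r, hmax, hc⟩
    refine ⟨r, hmax, ?_⟩
    rcases hc with h | ⟨he, hp⟩
    · exact Or.inl h
    · refine Or.inr ⟨he, ?_⟩
      have hmem : r ∈ supp w := (List.maximum_eq_coe_iff.1 hmax).1
      have hlt := norm_Phi_left_lt hmem he
      exact (PosC_iff_pos (by omega)).2 hp

lemma PosC_ne_one {K : Type} [LinearOrder K] {w : FreeGroup K} (h : PosC w) : w ≠ 1 := by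
  intro hw
  subst hw
  obtain ⟨r, hmax, -⟩ := (PosC_def 1).1 h
  rw [supp_one, List.maximum_nil] at hmax
  exact absurd hmax.symm (by simp)

lemma PosC_nonneg {K : Type} [LinearOrder K] {w : FreeGroup K} {r : K} (hp : PosC w)
    (hmax : (supp w).maximum = (r : WithBot K)) : 0 ≤ e r w := by
  obtain ⟨r', hmax', hc⟩ := (PosC_def w).1 hp
  have : r' = r := by
    rw [hmax] at hmax'
    exact_mod_cast hmax'.symm
  subst this
  rcases hc with h | ⟨he, -⟩
  · exact le_of_lt h
  · exact le_of_eq he.symm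

lemma PosC_neg_e {K : Type} [LinearOrder K] {w : FreeGroup K} {r : K}
    (hb : ∀ s ∈ supp w, s ≤ r) (he : e r w < 0) : ¬ PosC w := by
  intro hp
  have hmem : r ∈ supp w := e_ne_zero_mem (ne_of_lt he)
  have hmax : (supp w).maximum = (r : WithBot K) :=
    List.maximum_eq_coe_iff.2 ⟨hmem, hb⟩
  have := PosC_nonneg hp hmax
  omega

/-! ### Invariance under order embeddings -/

lemma PosC_one_false {K : Type} [LinearOrder K] : ¬ PosC (1 : FreeGroup K) :=
  fun h => PosC_ne_one h rfl

lemma maximum_map {K K' : Type} [LinearOrder K] [LinearOrder K'] {ι : K → K'}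
    (hι : StrictMono ι) {w : FreeGroup K} {r : K}
    (hmax : (supp w).maximum = (r : WithBot K)) :
    (supp (FreeGroup.map ι w)).maximum = (ι r : WithBot K') := by
  obtain ⟨hmem, hb⟩ := List.maximum_eq_coe_iff.1 hmax
  apply List.maximum_eq_coe_iff.2
  rw [supp_map_inj hι.injective]
  constructor
  · exact List.mem_map.2 ⟨r, hmem, rfl⟩
  · intro a ha
    obtain ⟨s, hs, rfl⟩ := List.mem_map.1 ha
    exact hι.monotone (hb s hs)

lemma PosC_map_iff : ∀ (n : ℕ) {K K' : Type} [LinearOrder K] [LinearOrder K']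
    (ι : K → K') (hι : StrictMono ι) (w : FreeGroup K), FreeGroup.norm w ≤ n →
    (PosC (FreeGroup.map ι w) ↔ PosC w) := by
  intro n
  induction n with
  | zero =>
    intro K K' _ _ ι hι w hw
    have hw1 : w = 1 := FreeGroup.norm_eq_zero.1 (Nat.le_zero.1 hw)
    subst hw1
    rw [_root_.map_one]
    exact iff_of_false PosC_one_false PosC_one_false
  | succ n ih =>
    intro K K' _ _ ι hι w hw
    by_cases hw1 : w = 1
    · subst hw1
      rw [_root_.map_one]
      exact iff_of_false PosC_one_false PosC_one_false
    · obtain ⟨r, hmax⟩ := list_max_exists (fun hc => hw1 (supp_eq_nil_iff.1 hc))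
      have hmax' := maximum_map hι hmax
      have he' : e (ι r) (FreeGroup.map ι w) = e r w := e_map hι.injective r w
      have hmem : r ∈ supp w := (List.maximum_eq_coe_iff.1 hmax).1
      constructor
      · intro hp
        obtain ⟨r', hm', hc⟩ := (PosC_def _).1 hp
        have hrr : r' = ι r := by
          rw [hmax'] at hm'
          exact_mod_cast hm'.symm
        rw [hrr] at hc
        rw [PosC_def]
        refine ⟨r, hmax, ?_⟩
        rcases hc with h | ⟨he, hpp⟩
        · exact Or.inl (by rw [he'] at h; exact h)
        · rw [he'] at he
          refine Or.inr ⟨he, ?_⟩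
          rw [Phi_map_left hι.injective] at hpp
          have hlt := norm_Phi_left_lt hmem he
          exact (ih (jmap ι) (jmap_strictMono hι) _ (by omega)).1 hpp
      · intro hp
        obtain ⟨r', hm', hc⟩ := (PosC_def _).1 hp
        have hrr : r' = r := by
          rw [hmax] at hm'
          exact_mod_cast hm'.symm
        rw [hrr] at hc
        rw [PosC_def]
        refine ⟨ι r, hmax', ?_⟩
        rcases hc with h | ⟨he, hpp⟩
        · exact Or.inl (by rw [he']; exact h)
        · refine Or.inr ⟨by rw [he']; exact he, ?_⟩
          rw [Phi_map_left hι.injective]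
          have hlt := norm_Phi_left_lt hmem he
          exact (ih (jmap ι) (jmap_strictMono hι) _ (by omega)).2 hpp

/-! ### Descent -/

lemma PosC_descent {K : Type} [LinearOrder K] {r : K} {w : FreeGroup K} (hne : w ≠ 1)
    (hb : ∀ s ∈ supp w, s ≤ r) (he : e r w = 0) :
    PosC w ↔ PosC ((Phi r w).left) := by
  by_cases hmem : r ∈ supp w
  · have hmax : (supp w).maximum = (r : WithBot K) := List.maximum_eq_coe_iff.2 ⟨hmem, hb⟩
    constructor
    · intro hp
      obtain ⟨r', hm', hc⟩ := (PosC_def _).1 hp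
      have hrr : r' = r := by
        rw [hmax] at hm'
        exact_mod_cast hm'.symm
      subst hrr
      rcases hc with h | ⟨-, hpp⟩
      · omega
      · exact hpp
    · intro hp
      exact (PosC_def _).2 ⟨r, hmax, Or.inr ⟨he, hp⟩⟩
  · rw [Phi_avoid hmem, SemidirectProduct.left_inl]
    exact (PosC_map_iff (FreeGroup.norm w) jj jj_strictMono w le_rfl).symm

/-! ### Totality -/

lemma PosC_total : ∀ (n : ℕ) {K : Type} [LinearOrder K] (w : FreeGroup K),
    FreeGroup.norm w ≤ n → w ≠ 1 → PosC w ∨ PosC w⁻¹ := by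
  intro n
  induction n with
  | zero =>
    intro K _ w hw hne
    exact absurd (FreeGroup.norm_eq_zero.1 (Nat.le_zero.1 hw)) hne
  | succ n ih =>
    intro K _ w hw hne
    obtain ⟨r, hmax⟩ := list_max_exists (fun hc => hne (supp_eq_nil_iff.1 hc))
    obtain ⟨hmem, hb⟩ := List.maximum_eq_coe_iff.1 hmax
    have hbi : ∀ s ∈ supp w⁻¹, s ≤ r := fun s hs => hb s (mem_supp_inv.1 hs)
    have hmaxi : (supp w⁻¹).maximum = (r : WithBot K) :=
      List.maximum_eq_coe_iff.2 ⟨mem_supp_inv.2 hmem, hbi⟩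
    rcases lt_trichotomy (e r w) 0 with hlt | heq | hgt
    · right
      refine (PosC_def _).2 ⟨r, hmaxi, Or.inl ?_⟩
      rw [e_inv]
      omega
    · -- descend
      have hv : (Phi r w).left ≠ 1 := by
        intro hc
        have h1 := Phi_eq_inl_of_e_zero heq
        rw [hc] at h1
        rw [_root_.map_one] at h1
        have := B_Phi r w
        rw [h1, _root_.map_one] at this
        exact hne this.symm
      have hlt2 := norm_Phi_left_lt hmem heq
      rcases ih ((Phi r w).left) (by omega) hv with hp | hp
      · left
        exact (PosC_def _).2 ⟨r, hmax, Or.inr ⟨heq, hp⟩⟩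
      · right
        have hei : e r w⁻¹ = 0 := by rw [e_inv]; omega
        have hli : (Phi r w⁻¹).left = ((Phi r w).left)⁻¹ := by
          rw [_root_.map_inv]
          exact Phi_inv_left_of_e_zero heq
        refine (PosC_def _).2 ⟨r, hmaxi, Or.inr ⟨hei, ?_⟩⟩
        rw [hli]
        exact hp
    · left
      exact (PosC_def _).2 ⟨r, hmax, Or.inl hgt⟩

/-! ### Multiplicativity -/

lemma PosC_mul : ∀ (n : ℕ) {K : Type} [LinearOrder K] (u w : FreeGroup K),
    FreeGroup.norm u + FreeGroup.norm w ≤ n → PosC u → PosC w → PosC (u * w) := by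
  intro n
  induction n with
  | zero =>
    intro K _ u w hn hu hw
    exact absurd (FreeGroup.norm_eq_zero.1 (by omega)) (PosC_ne_one hu)
  | succ n ih =>
    intro K _ u w hn hu hw
    have hneu : u ≠ 1 := PosC_ne_one hu
    have hnew : w ≠ 1 := PosC_ne_one hw
    obtain ⟨ru, hmaxu⟩ := list_max_exists (fun hc => hneu (supp_eq_nil_iff.1 hc))
    obtain ⟨rw_, hmaxw⟩ := list_max_exists (fun hc => hnew (supp_eq_nil_iff.1 hc))
    obtain ⟨hmemu, hbu⟩ := List.maximum_eq_coe_iff.1 hmaxu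
    obtain ⟨hmemw, hbw⟩ := List.maximum_eq_coe_iff.1 hmaxw
    set r := max ru rw_ with hr
    have hbu' : ∀ s ∈ supp u, s ≤ r := fun s hs => le_trans (hbu s hs) (le_max_left _ _)
    have hbw' : ∀ s ∈ supp w, s ≤ r := fun s hs => le_trans (hbw s hs) (le_max_right _ _)
    have hbm : ∀ s ∈ supp (u * w), s ≤ r := by
      intro s hs
      rcases mem_supp_mul hs with h | h
      · exact hbu' s h
      · exact hbw' s h
    have h1 : 0 ≤ e r u := by
      by_cases hm : r ∈ supp u
      · have hru : r = ru := le_antisymm (hbu r hm) (le_max_left _ _)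
        rw [hru]
        exact PosC_nonneg hu hmaxu
      · rw [e_eq_zero_of_not_mem hm]
    have h2 : 0 ≤ e r w := by
      by_cases hm : r ∈ supp w
      · have hrw : r = rw_ := le_antisymm (hbw r hm) (le_max_right _ _)
        rw [hrw]
        exact PosC_nonneg hw hmaxw
      · rw [e_eq_zero_of_not_mem hm]
    have hem : e r (u * w) = e r u + e r w := e_mul r u w
    rcases lt_or_eq_of_le (by omega : (0:ℤ) ≤ e r u + e r w) with hpos | hzero
    · -- positive exponent sum at the top
      have hne : e r (u * w) ≠ 0 := by omega
      have hmem : r ∈ supp (u * w) := e_ne_zero_mem hne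
      have hmax : (supp (u * w)).maximum = (r : WithBot K) :=
        List.maximum_eq_coe_iff.2 ⟨hmem, hbm⟩
      exact (PosC_def _).2 ⟨r, hmax, Or.inl (by omega)⟩
    · -- both exponent sums vanish
      have heu : e r u = 0 := by omega
      have hew : e r w = 0 := by omega
      have hvu : PosC ((Phi r u).left) := (PosC_descent hneu hbu' heu).1 hu
      have hvw : PosC ((Phi r w).left) := (PosC_descent hnew hbw' hew).1 hw
      have hprod : (Phi r (u * w)).left = (Phi r u).left * (Phi r w).left :=
        Phi_left_mul_of_e_zero heu
      -- norm bookkeeping: r belongs to supp u or supp w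
      have hnorm : FreeGroup.norm ((Phi r u).left) + FreeGroup.norm ((Phi r w).left) ≤ n := by
        rcases max_choice ru rw_ with hc | hc
        · have hmem' : r ∈ supp u := by rw [hr, hc]; exact hmemu
          have := norm_Phi_left_lt hmem' heu
          have := norm_Phi_left_le r w
          omega
        · have hmem' : r ∈ supp w := by rw [hr, hc]; exact hmemw
          have := norm_Phi_left_lt hmem' hew
          have := norm_Phi_left_le r u
          omega
      have hP : PosC ((Phi r u).left * (Phi r w).left) := ih _ _ hnorm hvu hvw
      have hneuw : u * w ≠ 1 := by
        intro hc
        have : (Phi r u).left * (Phi r w).left = 1 := by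
          rw [← hprod, hc, _root_.map_one]
          rfl
        exact PosC_ne_one hP this
      have heuw : e r (u * w) = 0 := by omega
      refine (PosC_descent hneuw hbm heuw).2 ?_
      rw [hprod]
      exact hP

/-! ### Closure and supports -/

lemma mk_mem_closure {K : Type} [LinearOrder K] {A : Set K} :
    ∀ L : List (K × Bool), (∀ p ∈ L, p.1 ∈ A) →
      FreeGroup.mk L ∈ Subgroup.closure (FreeGroup.of '' A) := by
  intro L
  induction L with
  | nil =>
    intro _
    show (1 : FreeGroup K) ∈ _
    exact one_mem _
  | cons p L ih =>
    intro hA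
    rw [mk_cons]
    refine mul_mem ?_ (ih (fun q hq => hA q (List.mem_cons_of_mem p hq)))
    have hp : p.1 ∈ A := hA p (List.mem_cons_self)
    rw [mk_singleton]
    cases p.2
    · exact inv_mem (Subgroup.subset_closure ⟨p.1, hp, rfl⟩)
    · exact Subgroup.subset_closure ⟨p.1, hp, rfl⟩

lemma mem_closure_of_supp {K : Type} [LinearOrder K] {A : Set K} {w : FreeGroup K}
    (h : ∀ s ∈ supp w, s ∈ A) : w ∈ Subgroup.closure (FreeGroup.of '' A) := by
  have := mk_mem_closure (A := A) w.toWord (by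
    intro p hp
    exact h p.1 (List.mem_map.2 ⟨p, hp, rfl⟩))
  rwa [mk_toWord] at this

lemma supp_subset_of_mem_closure {K : Type} [LinearOrder K] {A : Set K} {w : FreeGroup K}
    (h : w ∈ Subgroup.closure (FreeGroup.of '' A)) : ∀ s ∈ supp w, s ∈ A := by
  refine Subgroup.closure_induction ?_ ?_ ?_ ?_ h
  · rintro x ⟨a, ha, rfl⟩ s hs
    rw [supp_of] at hs
    rw [List.mem_singleton.1 hs]
    exact ha
  · intro s hs
    rw [supp_one] at hs
    exact absurd hs List.not_mem_nil
  · intro x y _ _ hx hy s hs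
    rcases mem_supp_mul hs with h1 | h1
    · exact hx s h1
    · exact hy s h1
  · intro x _ hx s hs
    exact hx s (mem_supp_inv.1 hs)

lemma Bleft_mem_closure {K : Type} [LinearOrder K] {S : Set K} (r : K) {v : FreeGroup (JJ K)}
    (hv : v ∈ Subgroup.closure (FreeGroup.of '' (jj '' S))) :
    Bleft r v ∈ Subgroup.closure (FreeGroup.of '' S) := by
  refine Subgroup.closure_induction ?_ ?_ ?_ ?_ hv
  · rintro x ⟨p, ⟨s, hs, rfl⟩, rfl⟩
    rw [Bleft_of_jj]
    exact Subgroup.subset_closure ⟨s, hs, rfl⟩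
  · rw [_root_.map_one]
    exact one_mem _
  · intro x y _ _ hx hy
    rw [_root_.map_mul]
    exact mul_mem hx hy
  · intro x _ hx
    rw [_root_.map_inv]
    exact inv_mem hx

/-! ### Convexity -/

lemma jj_image_downward {K : Type} [LinearOrder K] {S : Set K}
    (hS : ∀ x ∈ S, ∀ y, y < x → y ∈ S) :
    ∀ x ∈ jj '' S, ∀ y : JJ K, y < x → y ∈ jj '' S := by
  rintro x ⟨s, hs, rfl⟩ y hy
  have h1 : toLex (ofLex y) < toLex (ZZ.mk 0, s) := hy
  rw [Prod.Lex.lt_iff] at h1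
  rcases h1 with h | ⟨h1, h2⟩
  · exact absurd h (ZZ.not_lt_zero _)
  · refine ⟨(ofLex y).2, hS s hs _ h2, ?_⟩
    have h1' : (ofLex y).1 = ZZ.mk 0 := h1
    show toLex (ZZ.mk 0, (ofLex y).2) = y
    rw [← h1']
    rfl

lemma convex_aux : ∀ (n : ℕ) {K : Type} [LinearOrder K] (S : Set K)
    (hS : ∀ x ∈ S, ∀ y, y < x → y ∈ S) (f g h : FreeGroup K),
    f ∈ Subgroup.closure (FreeGroup.of '' S) → g ∈ Subgroup.closure (FreeGroup.of '' S) →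
    FreeGroup.norm h ≤ n → PosC (f⁻¹ * h) → PosC (h⁻¹ * g) →
    h ∈ Subgroup.closure (FreeGroup.of '' S) := by
  intro n
  induction n with
  | zero =>
    intro K _ S hS f g h hf hg hn _ _
    rw [FreeGroup.norm_eq_zero.1 (Nat.le_zero.1 hn)]
    exact one_mem _
  | succ n ih =>
    intro K _ S hS f g h hf hg hn hu hw
    classical
    by_cases hsub : ∀ s ∈ supp h, s ∈ S
    · exact mem_closure_of_supp hsub
    · push_neg at hsub
      obtain ⟨t, ht, htS⟩ := hsub
      set T := (supp h).filter (fun s => decide (s ∉ S)) with hT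
      have hTne : T ≠ [] := by
        intro hc
        have : t ∈ T := List.mem_filter.2 ⟨ht, by simp [htS]⟩
        rw [hc] at this
        exact List.not_mem_nil this
      obtain ⟨r, hrmax⟩ := list_max_exists hTne
      obtain ⟨hrT, hrbT⟩ := List.maximum_eq_coe_iff.1 hrmax
      have hrmem : r ∈ supp h := (List.mem_filter.1 hrT).1
      have hrS : r ∉ S := by
        have := (List.mem_filter.1 hrT).2
        simpa using this
      have hSr : ∀ s ∈ S, s < r := by
        intro s hs
        by_contra hc
        push_neg at hc
        rcases lt_or_eq_of_le hc with h1 | h1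
        · exact hrS (hS s hs r h1)
        · exact hrS (h1 ▸ hs)
      have hhb : ∀ s ∈ supp h, s ≤ r := by
        intro s hs
        by_cases hsS : s ∈ S
        · exact le_of_lt (hSr s hsS)
        · exact hrbT s (List.mem_filter.2 ⟨hs, by simp [hsS]⟩)
      have hsf : ∀ s ∈ supp f, s ∈ S := supp_subset_of_mem_closure hf
      have hsg : ∀ s ∈ supp g, s ∈ S := supp_subset_of_mem_closure hg
      have hrf : r ∉ supp f := fun hc => hrS (hsf r hc)
      have hrg : r ∉ supp g := fun hc => hrS (hsg r hc)
      have hef : e r f = 0 := e_eq_zero_of_not_mem hrf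
      have heg : e r g = 0 := e_eq_zero_of_not_mem hrg
      have hbu : ∀ s ∈ supp (f⁻¹ * h), s ≤ r := by
        intro s hs
        rcases mem_supp_mul hs with h1 | h1
        · exact le_of_lt (hSr s (hsf s (mem_supp_inv.1 h1)))
        · exact hhb s h1
      have hbw : ∀ s ∈ supp (h⁻¹ * g), s ≤ r := by
        intro s hs
        rcases mem_supp_mul hs with h1 | h1
        · exact hhb s (mem_supp_inv.1 h1)
        · exact le_of_lt (hSr s (hsg s h1))
      have heu : e r (f⁻¹ * h) = e r h := by
        rw [e_mul, e_inv, hef]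
        ring
      have hew : e r (h⁻¹ * g) = - e r h := by
        rw [e_mul, e_inv, heg]
        ring
      rcases lt_trichotomy (e r h) 0 with hlt | heq | hgt
      · exact absurd hu (PosC_neg_e hbu (by omega))
      · -- recursive case
        by_cases hu1 : f⁻¹ * h = 1
        · rw [← inv_mul_eq_one.1 hu1]
          exact hf
        · by_cases hw1 : h⁻¹ * g = 1
          · rw [inv_mul_eq_one.1 hw1]
            exact hg
          · have hfΦ : Phi r f = SemidirectProduct.inl (FreeGroup.map jj f) := Phi_avoid hrf
            have hgΦ : Phi r g = SemidirectProduct.inl (FreeGroup.map jj g) := Phi_avoid hrg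
            have hu' : (Phi r (f⁻¹ * h)).left = (FreeGroup.map jj f)⁻¹ * (Phi r h).left := by
              rw [Phi_left_inv_mul hef, hfΦ, SemidirectProduct.left_inl]
            have hw' : (Phi r (h⁻¹ * g)).left = ((Phi r h).left)⁻¹ * (FreeGroup.map jj g) := by
              rw [Phi_left_inv_mul heq, hgΦ, SemidirectProduct.left_inl]
            have hPu : PosC ((FreeGroup.map jj f)⁻¹ * (Phi r h).left) := by
              rw [← hu']
              exact (PosC_descent hu1 hbu (by omega)).1 hu
            have hPw : PosC (((Phi r h).left)⁻¹ * (FreeGroup.map jj g)) := by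
              rw [← hw']
              exact (PosC_descent hw1 hbw (by omega)).1 hw
            have hf' : FreeGroup.map jj f ∈ Subgroup.closure (FreeGroup.of '' (jj '' S)) := by
              apply mem_closure_of_supp
              intro s hs
              rw [supp_map_inj jj_strictMono.injective] at hs
              obtain ⟨s', hs', rfl⟩ := List.mem_map.1 hs
              exact ⟨s', hsf s' hs', rfl⟩
            have hg' : FreeGroup.map jj g ∈ Subgroup.closure (FreeGroup.of '' (jj '' S)) := by
              apply mem_closure_of_supp
              intro s hs
              rw [supp_map_inj jj_strictMono.injective] at hs
              obtain ⟨s', hs', rfl⟩ := List.mem_map.1 hs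
              exact ⟨s', hsg s' hs', rfl⟩
            have hnv : FreeGroup.norm ((Phi r h).left) ≤ n := by
              have := norm_Phi_left_lt hrmem heq
              omega
            have hvmem := ih (jj '' S) (jj_image_downward hS)
              (FreeGroup.map jj f) (FreeGroup.map jj g) ((Phi r h).left)
              hf' hg' hnv hPu hPw
            have heq2 : h = Bleft r ((Phi r h).left) := w_eq_Bleft heq
            rw [heq2]
            exact Bleft_mem_closure r hvmem
      · exact absurd hw (PosC_neg_e hbw (by omega))

/-! ### The main theorem -/

/-- Proposition 3.4: the free group on `{x_r : r ∈ ℝ}` admits a left-ordering relative to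
which the subgroup generated by `{x_r : r ∈ S}` is convex for every downward-closed
`S ⊆ ℝ`. -/
theorem stmt1 :
    ∃ P : Set (FreeGroup ℝ), IsPositiveCone P ∧
      ∀ S : Set ℝ, (∀ x ∈ S, ∀ y : ℝ, y < x → y ∈ S) →
        ∀ f ∈ Subgroup.closure (FreeGroup.of '' S),
          ∀ g ∈ Subgroup.closure (FreeGroup.of '' S),
            ∀ h : FreeGroup ℝ, coneLt P f h → coneLt P h g →
              h ∈ Subgroup.closure (FreeGroup.of '' S) := by
  refine ⟨{w : FreeGroup ℝ | PosC w}, ⟨?_, ?_⟩, ?_⟩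
  · intro a ha b hb
    exact PosC_mul (FreeGroup.norm a + FreeGroup.norm b) a b le_rfl ha hb
  · ext g
    simp only [Set.mem_union, Set.mem_inv, Set.mem_setOf_eq, Set.mem_setOf_eq]
    constructor
    · rintro (h | h)
      · exact PosC_ne_one h
      · intro hc
        rw [hc] at h
        exact PosC_ne_one h (by rw [inv_one])
    · intro hne
      rcases PosC_total (FreeGroup.norm g) g le_rfl hne with h | h
      · exact Or.inl h
      · exact Or.inr h
  · intro S hS f hf g hg h hfh hhg
    exact convex_aux (FreeGroup.norm h) S hS f g h hf hg le_rfl hfh hhg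

end Paper
end

section
/- Let F(X) be the free group on X = {x_r : r ∈ ℝ} and let < be a left-ordering of F(X) such that for every downward-closed S ⊆ ℝ (x ∈ S and y < x imply y ∈ S) the subgroup F(X_S) generated by {x_r : r ∈ S} is convex with respect to <. Then < is unnatural: there do not exist an injective group homomorphism ρ : F(X) → Aut(ℝ,≤) and a well-ordering ≺ of ℝ such that for all g, h ∈ F(X), g < h if and only if ρ(g) <_P ρ(h), where <_P is the natural ordering of Aut(ℝ,≤) determined by ≺. -/
namespace Paper

/-- A left-ordering of the free group `F(X)` on `X = {x_r : r ∈ ℝ}` in which the subgroup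
generated by `{x_r : r ∈ S}` is convex for every downward-closed `S ⊆ ℝ` is unnatural:
it is not induced, via any injective homomorphism `ρ : F(X) → Aut(ℝ,≤)`, by the natural
ordering of `Aut(ℝ,≤)` determined by any well-ordering of `ℝ`. -/
theorem stmt2 (P : Set (FreeGroup ℝ)) (hP : IsPositiveCone P)
    (hconv : ∀ S : Set ℝ, (∀ x ∈ S, ∀ y : ℝ, y < x → y ∈ S) →
      ∀ f ∈ Subgroup.closure (FreeGroup.of '' S),
        ∀ g ∈ Subgroup.closure (FreeGroup.of '' S),
          ∀ h : FreeGroup ℝ, coneLt P f h → coneLt P h g →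
            h ∈ Subgroup.closure (FreeGroup.of '' S)) :
    ¬ ∃ (ρ : FreeGroup ℝ →* (ℝ ≃o ℝ)) (r : ℝ → ℝ → Prop),
        Function.Injective ρ ∧ IsWellOrder ℝ r ∧
        ∀ g h : FreeGroup ℝ, coneLt P g h ↔ NatLt r (ρ g) (ρ h) := by
  rintro ⟨ρ, r, hinj, hwo, hiff⟩
  classical
  haveI := hwo
  have wf : WellFounded r := IsWellFounded.wf
  -- basic facts about the cone order
  have hP1 : (1 : FreeGroup ℝ) ∉ P := by
    intro h
    have h2 : (1 : FreeGroup ℝ) ∈ P ∪ P⁻¹ := Or.inl h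
    rw [hP.2] at h2
    exact h2 rfl
  have asym : ∀ f g : FreeGroup ℝ, coneLt P f g → coneLt P g f → False := by
    intro f g h1 h2
    have h3 := hP.1 _ h1 _ h2
    rw [show f⁻¹ * g * (g⁻¹ * f) = 1 by group] at h3
    exact hP1 h3
  have tri : ∀ f g : FreeGroup ℝ, f ≠ g → coneLt P f g ∨ coneLt P g f := by
    intro f g hne
    have h1 : f⁻¹ * g ∈ P ∪ P⁻¹ := by
      rw [hP.2]
      simpa [inv_mul_eq_one] using hne
    rcases h1 with h | h
    · exact Or.inl h
    · rw [Set.mem_inv, mul_inv_rev, inv_inv] at h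
      exact Or.inr h
  -- generators are nontrivial and not in closures they shouldn't be in
  have hofne : ∀ u : ℝ, FreeGroup.of u ≠ 1 := fun u => FreeGroup.of_ne_one u
  have hnotmem : ∀ (S : Set ℝ) (t : ℝ), t ∉ S →
      FreeGroup.of t ∉ Subgroup.closure (FreeGroup.of '' S) := by
    intro S t htS hmem
    set π : FreeGroup ℝ →* FreeGroup ℝ :=
      FreeGroup.lift (fun x => if x ∈ S then FreeGroup.of x else 1) with hπ
    have hfix : ∀ g ∈ Subgroup.closure (FreeGroup.of '' S), π g = g := by
      intro g hg
      induction hg using Subgroup.closure_induction with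
      | mem x hx =>
        obtain ⟨s, hs, rfl⟩ := hx
        simp [hπ, hs]
      | one => simp
      | mul x y hx hy ihx ihy => rw [map_mul, ihx, ihy]
      | inv x hx ihx => rw [map_inv, ihx]
    have h1 : π (FreeGroup.of t) = FreeGroup.of t := hfix _ hmem
    rw [show π (FreeGroup.of t) = 1 by simp [hπ, htS]] at h1
    exact hofne t h1.symm
  -- each generator moves some point
  have hρne : ∀ u : ℝ, ρ (FreeGroup.of u) ≠ 1 := by
    intro u h
    exact hofne u (hinj (by rw [h, map_one]))
  have hne : ∀ u : ℝ, {x : ℝ | ρ (FreeGroup.of u) x ≠ x}.Nonempty := by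
    intro u
    by_contra h
    rw [Set.not_nonempty_iff_eq_empty] at h
    apply hρne u
    ext x
    by_contra hx
    exact absurd (Set.eq_empty_iff_forall_notMem.1 h x) (by simpa using hx)
  -- least moved point of each generator
  set A : ℝ → ℝ := fun u => wf.min {x : ℝ | ρ (FreeGroup.of u) x ≠ x} (hne u) with hA
  have hAmove : ∀ u, ρ (FreeGroup.of u) (A u) ≠ A u :=
    fun u => wf.min_mem {x : ℝ | ρ (FreeGroup.of u) x ≠ x} (hne u)
  have hAfix : ∀ u y, r y (A u) → ρ (FreeGroup.of u) y = y := by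
    intro u y hy
    by_contra hmoved
    exact wf.not_lt_min {x : ℝ | ρ (FreeGroup.of u) x ≠ x} hmoved hy
  -- the r-least value of A
  set xs : ℝ := wf.min (Set.range A) ⟨A 0, Set.mem_range_self 0⟩ with hxs
  obtain ⟨t0, ht0⟩ : ∃ t0, A t0 = xs :=
    wf.min_mem (Set.range A) ⟨A 0, Set.mem_range_self 0⟩
  have hxs_le : ∀ u, ¬ r (A u) xs :=
    fun u => wf.not_lt_min (Set.range A) (Set.mem_range_self u)
  -- every element of the free group fixes every point r-below xs
  have hfixall : ∀ (g : FreeGroup ℝ) (y : ℝ), r y xs → ρ g y = y := by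
    intro g
    refine FreeGroup.induction_on g ?_ ?_ ?_ ?_
    · intro y hy; rw [map_one]; rfl
    · intro u y hy
      apply hAfix
      rcases (@trichotomous ℝ r _ (A u) xs) with h | h | h
      · exact absurd h (hxs_le u)
      · rwa [h]
      · exact IsTrans.trans y xs (A u) hy h
    · intro u ih y hy
      have h1 : ρ (pure u) y = y := ih y hy
      rw [map_inv]
      show (ρ (pure u)).symm y = y
      conv_lhs => rw [← h1]
      exact (ρ (pure u)).symm_apply_apply y
    · intro p q ihp ihq y hy
      rw [map_mul]
      show ρ p (ρ q y) = y
      rw [ihq y hy, ihp y hy]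
  -- positivity criterion at xs
  have mkNat : ∀ w : FreeGroup ℝ, xs < ρ w xs → NatPos r (ρ w) :=
    fun w hlt => ⟨xs, hlt.ne', fun y hy => hfixall w y hy, hlt⟩
  -- from cone comparison to value comparison at xs
  have keyval : ∀ c d : FreeGroup ℝ, coneLt P c d → ¬ (ρ d xs < ρ c xs) := by
    intro c d hcd hval
    apply asym c d hcd
    apply (hiff d c).2
    show NatPos r ((ρ d)⁻¹ * ρ c)
    rw [← map_inv, ← map_mul]
    apply mkNat
    rw [map_mul, map_inv]
    show xs < (ρ d).symm (ρ c xs)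
    have h5 := (ρ d).lt_iff_lt (x := xs) (y := (ρ d).symm (ρ c xs))
    rw [(ρ d).apply_symm_apply] at h5
    exact h5.1 hval
  -- the element aa moving xs upward
  have hmove0 : ρ (FreeGroup.of t0) xs ≠ xs := by
    have := hAmove t0
    rwa [ht0] at this
  set aa : FreeGroup ℝ :=
    if xs < ρ (FreeGroup.of t0) xs then FreeGroup.of t0 else (FreeGroup.of t0)⁻¹ with haa_def
  have haa : xs < ρ aa xs := by
    by_cases hcc : xs < ρ (FreeGroup.of t0) xs
    · rw [haa_def, if_pos hcc]; exact hcc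
    · rw [haa_def, if_neg hcc]
      have h2 : ρ (FreeGroup.of t0) xs < xs := lt_of_le_of_ne (not_lt.1 hcc) hmove0
      rw [map_inv]
      show xs < (ρ (FreeGroup.of t0)).symm xs
      have := (ρ (FreeGroup.of t0)).lt_iff_lt
        (x := xs) (y := (ρ (FreeGroup.of t0)).symm xs)
      rw [(ρ (FreeGroup.of t0)).apply_symm_apply] at this
      exact this.1 h2
  have haamem : ∀ t1 : ℝ, t0 ≤ t1 → aa ∈ Subgroup.closure (FreeGroup.of '' Set.Iic t1) := by
    intro t1 h1
    have hofmem : FreeGroup.of t0 ∈ Subgroup.closure (FreeGroup.of '' Set.Iic t1) :=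
      Subgroup.subset_closure ⟨t0, h1, rfl⟩
    rw [haa_def]
    by_cases hcc : xs < ρ (FreeGroup.of t0) xs
    · rw [if_pos hcc]; exact hofmem
    · rw [if_neg hcc]; exact inv_mem hofmem
  -- positive version of each generator
  set h : ℝ → FreeGroup ℝ :=
    fun t => if coneLt P 1 (FreeGroup.of t) then FreeGroup.of t else (FreeGroup.of t)⁻¹ with hh_def
  have hpos : ∀ t, coneLt P 1 (h t) := by
    intro t
    have hone : ∀ w : FreeGroup ℝ, coneLt P 1 w ↔ w ∈ P := by
      intro w; unfold coneLt; rw [inv_one, one_mul]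
    by_cases hcc : coneLt P 1 (FreeGroup.of t)
    · rw [hh_def]; simp only [if_pos hcc]; exact hcc
    · rw [hh_def]; simp only [if_neg hcc]
      have hnp := hcc
      rw [hone]
      have h1 : FreeGroup.of t ∈ P ∪ P⁻¹ := by
        rw [hP.2]; exact hofne t
      rcases h1 with h1 | h1
      · exact absurd ((hone (FreeGroup.of t)).2 h1) hnp
      · rwa [Set.mem_inv] at h1
  have hmemh : ∀ t t1 : ℝ, t ≤ t1 → h t ∈ Subgroup.closure (FreeGroup.of '' Set.Iic t1) := by
    intro t t1 ht
    have hofmem : FreeGroup.of t ∈ Subgroup.closure (FreeGroup.of '' Set.Iic t1) :=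
      Subgroup.subset_closure ⟨t, ht, rfl⟩
    rw [hh_def]
    by_cases hcc : coneLt P 1 (FreeGroup.of t)
    · simp only [if_pos hcc]; exact hofmem
    · simp only [if_neg hcc]; exact inv_mem hofmem
  have hnotmemh : ∀ t t1 : ℝ, t1 < t → h t ∉ Subgroup.closure (FreeGroup.of '' Set.Iic t1) := by
    intro t t1 ht
    have hof : FreeGroup.of t ∉ Subgroup.closure (FreeGroup.of '' Set.Iic t1) :=
      hnotmem _ _ (by simpa using not_le.2 ht)
    rw [hh_def]
    by_cases hcc : coneLt P 1 (FreeGroup.of t)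
    · simp only [if_pos hcc]; exact hof
    · simp only [if_neg hcc]
      intro hc
      exact hof ((Subgroup.closure (FreeGroup.of '' Set.Iic t1)).inv_mem_iff.1 hc)
  -- the key inequality
  have key : ∀ t1 t2 : ℝ, t0 < t1 → t1 < t2 →
      ρ (h t1 * aa) xs ≤ ρ (h t2) xs := by
    intro t1 t2 h1 h2
    set C := Subgroup.closure (FreeGroup.of '' Set.Iic t1) with hC
    have hdc : ∀ x ∈ Set.Iic t1, ∀ y : ℝ, y < x → y ∈ Set.Iic t1 :=
      fun x hx y hy => le_of_lt (lt_of_lt_of_le hy hx)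
    have hcC : h t1 * aa ∈ C := mul_mem (hmemh t1 t1 le_rfl) (haamem t1 h1.le)
    have hhC : h t2 ∉ C := hnotmemh t2 t1 h2
    have hlt1 : coneLt P (h t1 * aa) (h t2) := by
      rcases tri (h t1 * aa) (h t2) (fun he => hhC (he ▸ hcC)) with hlt | hgt
      · exact hlt
      · exact absurd (hconv _ hdc 1 (one_mem C) _ hcC _ (hpos t2) hgt) hhC
    exact not_lt.1 (keyval _ _ hlt1)
  -- disjoint nonempty rational-containing intervals
  have hUne : ∀ t : ℝ, ρ (h t) xs < ρ (h t * aa) xs := by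
    intro t
    rw [map_mul]
    show ρ (h t) xs < ρ (h t) (ρ aa xs)
    exact ((ρ (h t)).lt_iff_lt).2 haa
  have hexq : ∀ t : ℝ, ∃ q : ℚ, ρ (h t) xs < (q : ℝ) ∧ (q : ℝ) < ρ (h t * aa) xs :=
    fun t => exists_rat_btwn (hUne t)
  set e : ℝ → ℝ := fun x => t0 + 1 + Real.exp x with he_def
  have he_gt : ∀ x, t0 < e x := by
    intro x
    have := Real.exp_pos x
    rw [he_def]
    simp only
    linarith
  have he_inj : Function.Injective e := by
    intro x y hxy
    rw [he_def] at hxy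
    simp only at hxy
    exact Real.exp_injective (by linarith)
  set q : ℝ → ℚ := fun x => (hexq (e x)).choose with hq_def
  have hq1 : ∀ x : ℝ, ρ (h (e x)) xs < ((q x : ℚ) : ℝ) := fun x => (hexq (e x)).choose_spec.1
  have hq2 : ∀ x : ℝ, ((q x : ℚ) : ℝ) < ρ (h (e x) * aa) xs := fun x => (hexq (e x)).choose_spec.2
  have qinj : Function.Injective q := by
    intro x y hxy
    by_contra hne'
    have hexy : e x ≠ e y := fun hc => hne' (he_inj hc)
    rcases lt_or_gt_of_ne hexy with hlt | hlt
    · have hb := key (e x) (e y) (he_gt x) hlt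
      have hx2 := hq2 x
      have hy1 := hq1 y
      rw [hxy] at hx2
      linarith
    · have hb := key (e y) (e x) (he_gt y) hlt
      have hy2 := hq2 y
      have hx1 := hq1 x
      rw [← hxy] at hy2
      linarith
  haveI : Countable ℝ := qinj.countable
  exact Cardinal.not_countable_real Set.countable_univ

end Paper
end
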